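/- Let X be a smooth cubic surface over a perfect field k such that the Galois invariants (Pic X̄)^G of the geometric Picard group are of rank 1. Then the natural injections ℤ·K_X ↪ Pic X ↪ (Pic X̄)^G are all equalities; in particular Pic X is generated by the canonical class. The key point: the class K_X is not divisible in Pic X̄ because its intersection number with a line on X̄ is −1. -/
import Mathlib


/-- Let `X` be a smooth cubic surface over a perfect field `k` such that
the Galois invariants `(Pic X̄)^G` of the geometric Picard group have rank `1`.  Then the
natural injections `ℤ·K_X ↪ Pic X ↪ (Pic X̄)^G` are all equalities; in particular `Pic X`
is generated by the canonical class.  Formalization: inside the geometric Picard group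
`M = Pic X̄` sit `B = Pic X` and the invariants subgroup `C = (Pic X̄)^G`, with
`K_X ∈ Pic X ⊆ C`; `C` has rank one, i.e. is generated by a single element (`hC`); the
key point that `K_X` is not divisible in `Pic X̄` is witnessed by intersection with a
line on `X̄`, a homomorphism `φ : Pic X̄ → ℤ` with `φ(K_X) = −1`. -/
theorem stmt15 (M : Type*) [AddCommGroup M] (K : M) (B C : AddSubgroup M)
    (hKB : K ∈ B) (hBC : B ≤ C)
    (hC : ∃ c : M, C = AddSubgroup.zmultiples c)
    (φ : M →+ ℤ) (hφ : φ K = -1) :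
    AddSubgroup.zmultiples K = B ∧ B = C := by
  obtain ⟨c, rfl⟩ := hC
  have hKC : K ∈ AddSubgroup.zmultiples c := hBC hKB
  obtain ⟨n, hn⟩ := AddSubgroup.mem_zmultiples_iff.mp hKC
  have hphi : n * φ c = -1 := by
    have := congrArg φ hn
    simpa [map_zsmul, smul_eq_mul] using this.trans hφ
  have hnn : n * n = 1 := by
    have h1 : n * (-(φ c)) = 1 := by linarith
    rcases Int.eq_one_or_neg_one_of_mul_eq_one' h1 with ⟨h, _⟩ | ⟨h, _⟩ <;> subst h <;> ring
  have hc : c ∈ AddSubgroup.zmultiples K := by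
    refine ⟨n, ?_⟩
    show n • K = c
    rw [← hn, smul_smul, hnn, one_smul]
  have hCK : AddSubgroup.zmultiples c ≤ AddSubgroup.zmultiples K := by
    intro x hx
    obtain ⟨m, rfl⟩ := hx
    exact AddSubgroup.zsmul_mem _ hc m
  have hKB' : AddSubgroup.zmultiples K ≤ B := by
    intro x hx; obtain ⟨m, rfl⟩ := hx; exact AddSubgroup.zsmul_mem _ hKB m
  exact ⟨le_antisymm hKB' (hBC.trans hCK), le_antisymm hBC (hCK.trans hKB')⟩
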